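/- Let S be a field, p, q ∈ S, and define δ₁ : (u₁,u₂,v₁,v₂) ↦ (u₂, (p·v₂-q)/(u₁u₂(p-q·v₂)), v₂, v₁) on S⁴. Then δ₁⁶ = id on the set where all six iterates are defined. -/

import Mathlib

/-- The dual map `δ₁` of the (2,4)-reduction of the lattice modified KdV equation
has period 6, wherever all six iterates are defined. -/
theorem stmt9 {S : Type*} [Field S] (p q : S) (x : S × S × S × S) :
    let δ : S × S × S × S → S × S × S × S := fun y =>
      (y.2.1, (p * y.2.2.2 - q) / (y.1 * y.2.1 * (p - q * y.2.2.2)),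
       y.2.2.2, y.2.2.1)
    (∀ k < 6, (δ^[k] x).1 * (δ^[k] x).2.1 * (p - q * (δ^[k] x).2.2.2) ≠ 0) →
    δ^[6] x = x := by
  obtain ⟨a, b, c, d⟩ := x
  intro δ h
  have h0 := h 0 (by norm_num)
  have h1 := h 1 (by norm_num)
  have h2 := h 2 (by norm_num)
  simp only [Function.iterate_succ, Function.iterate_zero, Function.comp_apply, id_eq, δ]
    at h0 h1 h2
  rw [mul_ne_zero_iff, mul_ne_zero_iff] at h0
  obtain ⟨⟨ha, hb⟩, hd⟩ := h0
  rw [mul_ne_zero_iff, mul_ne_zero_iff, div_ne_zero_iff] at h1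
  obtain ⟨⟨-, hpd, -⟩, hc⟩ := h1
  rw [mul_ne_zero_iff, mul_ne_zero_iff] at h2
  obtain ⟨⟨-, h2y⟩, -⟩ := h2
  rw [div_ne_zero_iff] at h2y
  obtain ⟨hpc, -⟩ := h2y
  -- abbreviations (as plain terms)
  -- A := (p*d-q)/(a*b*(p-q*d)), E, F, G as below
  have prodbA : b * ((p * d - q) / (a * b * (p - q * d)))
      = (p * d - q) / (a * (p - q * d)) := by
    field_simp
  have step2 : (p * c - q) / (b * ((p * d - q) / (a * b * (p - q * d))) * (p - q * c))
      = a * (p * c - q) * (p - q * d) / ((p * d - q) * (p - q * c)) := by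
    rw [prodbA]; field_simp
  have prodAE : ((p * d - q) / (a * b * (p - q * d)))
      * (a * (p * c - q) * (p - q * d) / ((p * d - q) * (p - q * c)))
      = (p * c - q) / (b * (p - q * c)) := by
    field_simp; exact div_self (by rwa [mul_comm q d] at hd)
  have step3 : (p * d - q) / (((p * d - q) / (a * b * (p - q * d)))
        * (a * (p * c - q) * (p - q * d) / ((p * d - q) * (p - q * c))) * (p - q * d))
      = b * (p * d - q) * (p - q * c) / ((p - q * d) * (p * c - q)) := by
    rw [prodAE]; field_simp
  have prodEF : (a * (p * c - q) * (p - q * d) / ((p * d - q) * (p - q * c)))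
      * (b * (p * d - q) * (p - q * c) / ((p - q * d) * (p * c - q))) = a * b := by
    field_simp; exact div_self (by rwa [mul_comm q c] at hc)
  have step4 : (p * c - q) / ((a * (p * c - q) * (p - q * d) / ((p * d - q) * (p - q * c)))
        * (b * (p * d - q) * (p - q * c) / ((p - q * d) * (p * c - q))) * (p - q * c))
      = (p * c - q) / (a * b * (p - q * c)) := by
    rw [prodEF]
  have prodFG : (b * (p * d - q) * (p - q * c) / ((p - q * d) * (p * c - q)))
      * ((p * c - q) / (a * b * (p - q * c)))
      = (p * d - q) / (a * (p - q * d)) := by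
    field_simp
  have step5 : (p * d - q) / ((b * (p * d - q) * (p - q * c) / ((p - q * d) * (p * c - q)))
        * ((p * c - q) / (a * b * (p - q * c))) * (p - q * d))
      = a := by
    rw [prodFG]; field_simp; exact div_self (by rwa [mul_comm q d] at hd)
  have step6 : (p * c - q) / (((p * c - q) / (a * b * (p - q * c))) * a * (p - q * c))
      = b := by
    field_simp
    exact div_self (by rwa [mul_comm q c] at hc)
  show δ (δ (δ (δ (δ (δ (a, b, c, d)))))) = (a, b, c, d)
  show δ (δ (δ (δ (δ (b, (p * d - q) / (a * b * (p - q * d)), d, c))))) = (a, b, c, d)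
  show δ (δ (δ (δ ((p * d - q) / (a * b * (p - q * d)),
      (p * c - q) / (b * ((p * d - q) / (a * b * (p - q * d))) * (p - q * c)), c, d))))
    = (a, b, c, d)
  rw [step2]
  show δ (δ (δ (a * (p * c - q) * (p - q * d) / ((p * d - q) * (p - q * c)),
      (p * d - q) / (((p * d - q) / (a * b * (p - q * d)))
        * (a * (p * c - q) * (p - q * d) / ((p * d - q) * (p - q * c))) * (p - q * d)), d, c)))
    = (a, b, c, d)
  rw [step3]
  show δ (δ (b * (p * d - q) * (p - q * c) / ((p - q * d) * (p * c - q)),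
      (p * c - q) / ((a * (p * c - q) * (p - q * d) / ((p * d - q) * (p - q * c)))
        * (b * (p * d - q) * (p - q * c) / ((p - q * d) * (p * c - q))) * (p - q * c)), c, d))
    = (a, b, c, d)
  rw [step4]
  show δ ((p * c - q) / (a * b * (p - q * c)),
      (p * d - q) / ((b * (p * d - q) * (p - q * c) / ((p - q * d) * (p * c - q)))
        * ((p * c - q) / (a * b * (p - q * c))) * (p - q * d)), d, c)
    = (a, b, c, d)
  rw [step5]
  show (a, (p * c - q) / (((p * c - q) / (a * b * (p - q * c))) * a * (p - q * c)), c, d)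
    = (a, b, c, d)
  rw [step6]
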